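/- Let D be a set of states with an ordered finite crossing set V, and for a state S let m(S) denote its number of negative markers. Define d = \sum_v (-1)^{t(S,v)} d_v with t(S,v) the number of negative markers above v, and d^+ = \sum_v (-1)^{t^+(S,v)} d_v with t^+(S,v) the number of positive markers above v. If |V| = n, then the map g(S) = (-1)^{u(S)} S, where u(S) is the number of positively marked crossings v_i in S with i ≡ n+1 (mod 2), is a chain isomorphism (C, d) → (C, d^+). -/

import Mathlib

private lemma neg_one_pow_congr_mod2 {a b : ℕ} (h : a % 2 = b % 2) :
    ((-1 : ℤ)) ^ a = (-1) ^ b := by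
  conv_lhs => rw [← Nat.div_add_mod a 2]
  conv_rhs => rw [← Nat.div_add_mod b 2]
  simp [pow_add, pow_mul, h]

/-- With crossings `v_1, …, v_n` (zero-based: `Fin n`, the `i`-th
crossing having one-based index `i+1`), the map `g(S) = (-1)^{u(S)} S`, where
`u(S)` is the number of positively marked crossings `v_i` with `i ≡ n+1 (mod 2)`,
is a chain isomorphism `(C, d) → (C, d⁺)`, where `d` uses signs counting negative
markers above `v` and `d⁺` uses signs counting positive markers above `v`. -/
theorem stmt_2
    {S : Type*} (n : ℕ)
    (marker : S → Fin n → ℤˣ)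
    (Dv : Fin n → (S →₀ ℤ) →+ (S →₀ ℤ))
    (hsupp : ∀ (v : Fin n) (s : S), ∀ s' ∈ (Dv v (Finsupp.single s 1)).support,
        marker s v = 1 ∧ marker s' v = -1 ∧ ∀ w, w ≠ v → marker s' w = marker s w)
    (hcomm : ∀ v w : Fin n, (Dv v).comp (Dv w) = (Dv w).comp (Dv v))
    (hsq : ∀ v : Fin n, (Dv v).comp (Dv v) = 0)
    (t tplus : S → Fin n → ℕ) (u : S → ℕ)
    (ht : ∀ (s : S) (v : Fin n), t s v = Set.ncard {w : Fin n | v < w ∧ marker s w = -1})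
    (htplus : ∀ (s : S) (v : Fin n),
        tplus s v = Set.ncard {w : Fin n | v < w ∧ marker s w = 1})
    (hu : ∀ s : S, u s = Set.ncard {i : Fin n | marker s i = 1 ∧ (i.1 + 1) % 2 = (n + 1) % 2})
    (d dplus : (S →₀ ℤ) →+ (S →₀ ℤ))
    (hd : ∀ s : S, d (Finsupp.single s 1) =
        ∑ v : Fin n, ((-1 : ℤ) ^ t s v) • Dv v (Finsupp.single s 1))
    (hdplus : ∀ s : S, dplus (Finsupp.single s 1) =
        ∑ v : Fin n, ((-1 : ℤ) ^ tplus s v) • Dv v (Finsupp.single s 1))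
    (g : (S →₀ ℤ) →+ (S →₀ ℤ))
    (hg : ∀ s : S, g (Finsupp.single s 1) = ((-1 : ℤ) ^ u s) • Finsupp.single s 1) :
    g.comp d = dplus.comp g ∧ Function.Bijective g := by
  classical
  -- units of ℤ are ±1
  have hunits : ∀ x : ℤˣ, x = -1 ↔ ¬ x = 1 := by
    intro x; rcases Int.units_eq_one_or x with h | h <;> simp [h]
  -- convert ncard of a set of `Fin n` to a filter card
  have hncard : ∀ (P : Fin n → Prop) [DecidablePred P],
      Set.ncard {w : Fin n | P w} = (Finset.univ.filter P).card := by
    intro P _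
    simp [Set.ncard_eq_toFinset_card', Set.toFinset_setOf]
  -- t + tplus counts all crossings above v
  have http : ∀ (s : S) (v : Fin n), t s v + tplus s v = n - 1 - v.1 := by
    intro s v
    rw [ht, htplus, hncard, hncard]
    have h1 : (Finset.univ.filter fun w : Fin n => v < w ∧ marker s w = -1)
        = (Finset.univ.filter fun w : Fin n => v < w).filter
            (fun w => ¬ marker s w = 1) := by
      rw [Finset.filter_filter]
      apply Finset.filter_congr
      intro w _
      simp [hunits]
    have h2 : (Finset.univ.filter fun w : Fin n => v < w ∧ marker s w = 1)
        = (Finset.univ.filter fun w : Fin n => v < w).filter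
            (fun w => marker s w = 1) := by
      rw [Finset.filter_filter]
    rw [h1, h2, Nat.add_comm, Finset.card_filter_add_card_filter_not,
      Finset.filter_lt_eq_Ioi, Fin.card_Ioi]
  -- how g acts on a finsupp whose support has constant sign
  have hgf : ∀ (f : S →₀ ℤ) (c : ℤ), (∀ a ∈ f.support, ((-1 : ℤ)) ^ (u a) = c) →
      g f = c • f := by
    intro f c h
    conv_lhs => rw [← Finsupp.sum_single f]
    rw [Finsupp.sum, map_sum]
    conv_rhs => rw [← Finsupp.sum_single f, Finsupp.sum, Finset.smul_sum]
    refine Finset.sum_congr rfl fun a ha => ?_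
    have h1 : Finsupp.single a (f a) = (f a) • Finsupp.single a (1 : ℤ) := by
      simp
    rw [h1, map_zsmul, hg a, ← h a ha, smul_comm]
  -- key parity fact for states in the support of `Dv v (single s 1)`
  have hkey : ∀ (s : S) (v : Fin n), ∀ s' ∈ (Dv v (Finsupp.single s 1)).support,
      (t s v + u s') % 2 = (tplus s v + u s) % 2 := by
    intro s v s' hs'
    obtain ⟨hsv, hs'v, hagree⟩ := hsupp v s s' hs'
    -- u s = u s' + e
    have hA : (Finset.univ.filter fun i : Fin n =>
          marker s' i = 1 ∧ (i.1 + 1) % 2 = (n + 1) % 2)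
        = (Finset.univ.filter fun i : Fin n =>
          marker s i = 1 ∧ (i.1 + 1) % 2 = (n + 1) % 2).erase v := by
      ext i
      by_cases hi : i = v
      · subst hi
        simp [hs'v]
      · simp [hi, hagree i hi]
    have hue : u s = u s' + (if (v.1 + 1) % 2 = (n + 1) % 2 then 1 else 0) := by
      rw [hu, hu, hncard, hncard, hA]
      have hv : v ∈ (Finset.univ.filter fun i : Fin n =>
          marker s i = 1 ∧ (i.1 + 1) % 2 = (n + 1) % 2)
          ↔ (v.1 + 1) % 2 = (n + 1) % 2 := by simp [hsv]
      by_cases hc : (v.1 + 1) % 2 = (n + 1) % 2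
      · rw [if_pos hc, Finset.card_erase_of_mem (hv.mpr hc)]
        have : 0 < (Finset.univ.filter fun i : Fin n =>
            marker s i = 1 ∧ (i.1 + 1) % 2 = (n + 1) % 2).card :=
          Finset.card_pos.mpr ⟨v, hv.mpr hc⟩
        omega
      · rw [if_neg hc, Finset.erase_eq_of_notMem (fun hmem => hc (hv.mp hmem))]
        omega
    have hts := http s v
    have hvn : v.1 < n := v.2
    by_cases hc : (v.1 + 1) % 2 = (n + 1) % 2 <;>
      [rw [if_pos hc] at hue; rw [if_neg hc] at hue] <;> omega
  constructor
  · -- chain map equality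
    refine Finsupp.addHom_ext fun s m => ?_
    have h1 : (Finsupp.single s m : S →₀ ℤ) = m • Finsupp.single s 1 := by simp
    rw [AddMonoidHom.comp_apply, AddMonoidHom.comp_apply, h1,
      map_zsmul, map_zsmul, map_zsmul, map_zsmul]
    congr 1
    rw [hd s, hg s, map_sum, map_zsmul, hdplus s, Finset.smul_sum]
    refine Finset.sum_congr rfl fun v _ => ?_
    rw [map_zsmul]
    have hDv : g (Dv v (Finsupp.single s 1))
        = ((-1 : ℤ) ^ (u s + tplus s v + t s v)) • Dv v (Finsupp.single s 1) := by
      refine hgf _ _ fun a ha => ?_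
      refine neg_one_pow_congr_mod2 ?_
      have := hkey s v a ha
      omega
    rw [hDv, smul_smul, smul_smul, ← pow_add, ← pow_add]
    congr 1
    refine neg_one_pow_congr_mod2 ?_
    omega
  · -- bijectivity: g is an involution
    have hinv : ∀ x, g (g x) = x := by
      intro x
      have : g.comp g = AddMonoidHom.id _ := by
        refine Finsupp.addHom_ext fun s m => ?_
        have h1 : (Finsupp.single s m : S →₀ ℤ) = m • Finsupp.single s 1 := by simp
        rw [AddMonoidHom.comp_apply, AddMonoidHom.id_apply, h1, map_zsmul, map_zsmul]
        congr 1
        rw [hg s, map_zsmul, hg s, smul_smul, ← pow_add]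
        have : ((-1 : ℤ)) ^ (u s + u s) = 1 := Even.neg_one_pow ⟨u s, rfl⟩
        rw [this, one_smul]
      calc g (g x) = g.comp g x := rfl
        _ = x := by rw [this]; rfl
    exact ⟨Function.LeftInverse.injective hinv, Function.RightInverse.surjective hinv⟩
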